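/- Combined optimality theorem: Let S = {f ∈ B : Λ(f) ≤ C} be compact in the closure of the realization space, with Λ quasi-convex, and let Ω_N = {Φ ∈ P_N : Λ(R(Φ)) ≤ C}. Assume for every architecture N the realization map is (s,α) inverse stable on Ω_N with parameters independent of N, and assume L is convex and c-Lipschitz on S. Then for all ε, r > 0 there exists an architecture size n(ε, r) such that for every architecture N at least as large (coordinatewise in the hidden layers), every local minimum Γ* of min_{Γ ∈ Ω_N} L(R(Γ)) with radius at least r satisfies L(R(Γ*)) ≤ min_{Γ ∈ Ω_N} L(R(Γ)) + ε. -/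

import Mathlib

lemma approx_aux {B : Type*} [NormedAddCommGroup B] {Lhid : ℕ}
    {P : (Fin Lhid → ℕ) → Type*} {R : ∀ N, P N → B} {Ω : ∀ N, Set (P N)}
    {S : Set B} (hcompact : IsCompact S)
    (hdense : S ⊆ closure (⋃ N, R N '' Ω N))
    (hmono : ∀ N N', (∀ i, N i ≤ N' i) → R N '' Ω N ⊆ R N' '' Ω N')
    {η : ℝ} (hη : 0 < η) :
    ∃ n, ∀ f ∈ S, ∃ h ∈ R n '' Ω n, ‖f - h‖ ≤ η := by
  have hchoice : ∀ f : S, ∃ (N : Fin Lhid → ℕ) (h : B),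
      h ∈ R N '' Ω N ∧ dist (f : B) h < η / 2 := by
    intro f
    have hf := hdense f.2
    rw [Metric.mem_closure_iff] at hf
    obtain ⟨h, hh, hd⟩ := hf (η / 2) (by linarith)
    rw [Set.mem_iUnion] at hh
    obtain ⟨N, hN⟩ := hh
    exact ⟨N, h, hN, hd⟩
  choose Nf hf hfmem hfdist using hchoice
  have hcover : S ⊆ ⋃ f : S, Metric.ball (f : B) (η / 2) := by
    intro x hx
    exact Set.mem_iUnion.2 ⟨⟨x, hx⟩, Metric.mem_ball_self (by linarith)⟩
  obtain ⟨t, ht⟩ := hcompact.elim_finite_subcover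
    (fun f : S => Metric.ball (f : B) (η / 2)) (fun _ => Metric.isOpen_ball) hcover
  refine ⟨fun i => t.sup (fun f => Nf f i), ?_⟩
  intro x hx
  obtain ⟨f, hft, hxf⟩ : ∃ f ∈ t, x ∈ Metric.ball (f : B) (η / 2) := by
    have := ht hx
    simpa using this
  refine ⟨hf f, hmono (Nf f) _ (fun i => Finset.le_sup (f := fun f => Nf f i) hft) (hfmem f), ?_⟩
  have h1 : dist x (f : B) < η / 2 := hxf
  have h2 : dist (f : B) (hf f) < η / 2 := hfdist f
  calc ‖x - hf f‖ = dist x (hf f) := (dist_eq_norm _ _).symm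
    _ ≤ dist x (f : B) + dist (f : B) (hf f) := dist_triangle _ _ _
    _ ≤ η := by linarith

/-- Almost optimality of local parameter minima (Theorem `thm:optPara`):
under uniform inverse stability and compactness of the regularized class
`S = {Λ ≤ C}` in the closure of the realization spaces, for all `ε, r > 0`
there is an architecture size `n(ε,r)` such that for every larger architecture
every local minimum of radius `r` of the regularized parametrized problem is
`ε`-optimal. -/
theorem stmt_16 {B : Type*} [NormedAddCommGroup B] [NormedSpace ℝ B]
    (Lhid : ℕ)
    (P : (Fin Lhid → ℕ) → Type*) [∀ N, NormedAddCommGroup (P N)]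
    (R : ∀ N, P N → B)
    (Λ : B → ℝ) (hΛ : QuasiconvexOn ℝ Set.univ Λ) (Creg : ℝ)
    (S : Set B) (hS : S = {f | Λ f ≤ Creg})
    (Ω : ∀ N, Set (P N)) (hΩ : ∀ N, Ω N = {Φ | Λ (R N Φ) ≤ Creg})
    (hcompact : IsCompact S)
    (hdense : S ⊆ closure (⋃ N, R N '' Ω N))
    (hmono : ∀ N N', (∀ i, N i ≤ N' i) → R N '' Ω N ⊆ R N' '' Ω N')
    (L : B → ℝ) (hL : ∀ g, 0 ≤ L g) (c : ℝ) (hLconv : ConvexOn ℝ S L)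
    (hLlip : ∀ x ∈ S, ∀ y ∈ S, |L x - L y| ≤ c * ‖x - y‖)
    (s α : ℝ) (hs : 0 < s) (hα : 0 < α)
    (hinv : ∀ N, ∀ Γ ∈ Ω N, ∀ g ∈ R N '' Ω N,
      ∃ Φ ∈ Ω N, R N Φ = g ∧ ‖Φ - Γ‖ ≤ s * ‖g - R N Γ‖ ^ α) :
    ∀ ε r : ℝ, 0 < ε → 0 < r → ∃ n : Fin Lhid → ℕ,
      ∀ N : Fin Lhid → ℕ, (∀ i, n i ≤ N i) →
        ∀ Γs ∈ Ω N, (∀ Φ ∈ Ω N, ‖Φ - Γs‖ ≤ r → L (R N Γs) ≤ L (R N Φ)) →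
          ∀ Γ ∈ Ω N, L (R N Γs) ≤ L (R N Γ) + ε := by
  intro ε r hε hr
  -- Lipschitz constant bounded below by 1
  set c' : ℝ := max c 1 with hc'def
  have hc'pos : (0:ℝ) < c' := lt_of_lt_of_le one_pos (le_max_right _ _)
  have hLlip' : ∀ x ∈ S, ∀ y ∈ S, |L x - L y| ≤ c' * ‖x - y‖ := by
    intro x hx y hy
    exact le_trans (hLlip x hx y hy)
      (mul_le_mul_of_nonneg_right (le_max_left _ _) (norm_nonneg _))
  -- diameter bound
  obtain ⟨D0, hD0⟩ := Metric.isBounded_iff.1 hcompact.isBounded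
  set D : ℝ := max D0 1 with hDdef
  have hDpos : (0:ℝ) < D := lt_of_lt_of_le one_pos (le_max_right _ _)
  have hDbound : ∀ x ∈ S, ∀ y ∈ S, ‖x - y‖ ≤ D := by
    intro x hx y hy
    rw [← dist_eq_norm]
    exact le_trans (hD0 hx hy) (le_max_left _ _)
  -- radius in realization space
  set r' : ℝ := (r / s) ^ (1 / α) with hr'def
  have hrs : (0:ℝ) < r / s := div_pos hr hs
  have hr'pos : (0:ℝ) < r' := Real.rpow_pos_of_pos hrs _
  have hr'pow : s * r' ^ α = r := by
    have : r' ^ α = r / s := by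
      rw [hr'def, ← Real.rpow_mul hrs.le, one_div_mul_cancel hα.ne', Real.rpow_one]
    rw [this]
    field_simp
  -- convex combination parameter
  set t : ℝ := min 1 (r' / (2 * D)) with htdef
  have htpos : (0:ℝ) < t := lt_min one_pos (div_pos hr'pos (by linarith))
  have ht1 : t ≤ 1 := min_le_left _ _
  have htD : t * D ≤ r' / 2 := by
    have h1 : t ≤ r' / (2 * D) := min_le_right _ _
    calc t * D ≤ (r' / (2 * D)) * D := mul_le_mul_of_nonneg_right h1 hDpos.le
      _ = r' / 2 := by field_simp
  -- approximation accuracy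
  set η : ℝ := min (r' / 2) (ε * t / c') with hηdef
  have hηpos : (0:ℝ) < η :=
    lt_min (by linarith) (div_pos (mul_pos hε htpos) hc'pos)
  obtain ⟨n, hn⟩ := approx_aux hcompact hdense hmono hηpos
  refine ⟨n, ?_⟩
  intro N hN Γs hΓs hloc Γ hΓ
  -- realizations lie in S
  have hgsS : R N Γs ∈ S := by rw [hS]; rw [hΩ] at hΓs; exact hΓs
  have hgS : R N Γ ∈ S := by rw [hS]; rw [hΩ] at hΓ; exact hΓ
  set gs : B := R N Γs with hgsdef
  set g : B := R N Γ with hgdef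
  set gt : B := (1 - t) • gs + t • g with hgtdef
  have hgtS : gt ∈ S := by
    have hconv := hΛ Creg
    have := hconv (x := gs) ⟨Set.mem_univ _, by rw [hS] at hgsS; exact hgsS⟩
      (y := g) ⟨Set.mem_univ _, by rw [hS] at hgS; exact hgS⟩
      (by linarith : (0:ℝ) ≤ 1 - t) htpos.le (by ring)
    rw [hS]
    exact this.2
  -- approximate gt
  obtain ⟨h, hhmem, hhdist⟩ := hn gt hgtS
  have hhmemN : h ∈ R N '' Ω N := hmono n N hN hhmem
  have hhS : h ∈ S := by
    obtain ⟨Φ, hΦ, hRΦ⟩ := hhmemN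
    rw [hS, ← hRΦ]
    rw [hΩ] at hΦ
    exact hΦ
  -- distance estimates
  have hgtgs : ‖gt - gs‖ = t * ‖g - gs‖ := by
    have : gt - gs = t • (g - gs) := by
      rw [hgtdef]; rw [sub_smul, one_smul, smul_sub]; abel
    rw [this, norm_smul, Real.norm_eq_abs, abs_of_pos htpos]
  have hgtgs_le : ‖gt - gs‖ ≤ r' / 2 := by
    rw [hgtgs]
    calc t * ‖g - gs‖ ≤ t * D :=
          mul_le_mul_of_nonneg_left (hDbound g hgS gs hgsS) htpos.le
      _ ≤ r' / 2 := htD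
  have hηle : η ≤ r' / 2 := min_le_left _ _
  have hhgs : ‖h - gs‖ ≤ r' := by
    calc ‖h - gs‖ ≤ ‖h - gt‖ + ‖gt - gs‖ := by
          have := norm_add_le (h - gt) (gt - gs)
          rwa [sub_add_sub_cancel] at this
      _ ≤ η + r' / 2 := by
          have : ‖h - gt‖ = ‖gt - h‖ := norm_sub_rev _ _
          rw [this]
          exact add_le_add hhdist hgtgs_le
      _ ≤ r' := by linarith
  -- inverse stability
  obtain ⟨Φ, hΦΩ, hRΦ, hΦdist⟩ := hinv N Γs hΓs h hhmemN
  have hΦr : ‖Φ - Γs‖ ≤ r := by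
    calc ‖Φ - Γs‖ ≤ s * ‖h - gs‖ ^ α := hΦdist
      _ ≤ s * r' ^ α := by
          apply mul_le_mul_of_nonneg_left _ hs.le
          exact Real.rpow_le_rpow (norm_nonneg _) hhgs hα.le
      _ = r := hr'pow
  -- local minimality
  have hmin : L gs ≤ L h := by
    have := hloc Φ hΦΩ hΦr
    rwa [hRΦ] at this
  -- convexity
  have hconvL : L gt ≤ (1 - t) * L gs + t * L g :=
    hLconv.2 hgsS hgS (by linarith) htpos.le (by ring)
  -- Lipschitz
  have hlip : L h ≤ L gt + c' * η := by
    have h1 := hLlip' h hhS gt hgtS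
    have h2 : L h - L gt ≤ c' * ‖h - gt‖ := le_trans (le_abs_self _) h1
    have h3 : ‖h - gt‖ ≤ η := by rw [norm_sub_rev]; exact hhdist
    nlinarith
  -- combine
  have hηε : c' * η ≤ ε * t := by
    have : η ≤ ε * t / c' := min_le_right _ _
    calc c' * η ≤ c' * (ε * t / c') := mul_le_mul_of_nonneg_left this hc'pos.le
      _ = ε * t := by field_simp
  have hexp : (1 - t) * L gs + t * L g = L gs - t * L gs + t * L g := by ring
  rw [hexp] at hconvL
  have key : t * L gs ≤ t * (L g + ε) := by
    have h1 : t * (L g + ε) = t * L g + ε * t := by ring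
    linarith
  exact le_of_mul_le_mul_left key htpos
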